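/- For every r ≥ 2, lim_{n→∞} ρ(A_n^{(r)}) = (r−1)!·4^{1/r}, where A_n^{(r)} is the r-uniform loose path with n edges. Moreover (1 + 2/n + 1/n²)^{−1/r}·(r−1)!·4^{1/r} ≤ ρ(A_n^{(r)}) < (r−1)!·4^{1/r} for all n. -/

import Mathlib

open Finset Filter Topology

/-- Spectral radius of an `r`-uniform hypergraph with edge set `E`. -/
noncomputable def specRad (r : ℕ) {V : Type} [Fintype V] (E : Finset (Finset V)) : ℝ :=
  sSup {ρ : ℝ | ∃ x : V → ℝ, (∀ v, 0 ≤ x v) ∧ x ≠ 0 ∧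
    ρ = (Nat.factorial r : ℝ) * (∑ e ∈ E, ∏ v ∈ e, x v) / (∑ v, x v ^ r)}

section Aux

variable {V : Type} [Fintype V] [DecidableEq V]

/-- weighted AM-GM specialized to an edge. -/
lemma edge_amgm {r : ℕ} (hr : 0 < r) (s : Finset V) (hs : s.card = r)
    (x w : V → ℝ) (hx : ∀ v, 0 ≤ x v) (hw : ∀ v ∈ s, 0 < w v) :
    (r : ℝ) * ∏ v ∈ s, x v
      ≤ (∏ v ∈ s, w v) ^ (-(1:ℝ)/(r:ℝ)) * ∑ v ∈ s, w v * x v ^ r := by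
  have hrR : (0:ℝ) < (r:ℝ) := by exact_mod_cast hr
  have hgm := Real.geom_mean_le_arith_mean_weighted s (fun _ => 1/(r:ℝ))
      (fun v => w v * x v ^ r) (fun i _ => div_nonneg zero_le_one hrR.le)
      (by rw [Finset.sum_const, hs, nsmul_eq_mul]; field_simp)
      (fun i hi => mul_nonneg (hw i hi).le (pow_nonneg (hx i) r))
  have hlhs : (∏ v ∈ s, (w v * x v ^ r) ^ ((1:ℝ)/(r:ℝ)))
      = (∏ v ∈ s, w v) ^ ((1:ℝ)/(r:ℝ)) * ∏ v ∈ s, x v := by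
    rw [← Real.finset_prod_rpow s w (fun v hv => (hw v hv).le), ← Finset.prod_mul_distrib]
    refine Finset.prod_congr rfl fun v hv => ?_
    rw [Real.mul_rpow (hw v hv).le (pow_nonneg (hx v) r)]
    congr 1
    rw [← Real.rpow_natCast (x v) r, ← Real.rpow_mul (hx v), mul_one_div,
      div_self (ne_of_gt hrR), Real.rpow_one]
  rw [hlhs] at hgm
  have hP : (0:ℝ) < ∏ v ∈ s, w v := Finset.prod_pos hw
  have hA : (0:ℝ) < (∏ v ∈ s, w v) ^ (-(1:ℝ)/(r:ℝ)) := Real.rpow_pos_of_pos hP _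
  have hAB : (∏ v ∈ s, w v) ^ (-(1:ℝ)/(r:ℝ)) * (∏ v ∈ s, w v) ^ ((1:ℝ)/(r:ℝ)) = 1 := by
    rw [← Real.rpow_add hP, show -(1:ℝ)/(r:ℝ) + (1:ℝ)/(r:ℝ) = 0 by ring, Real.rpow_zero]
  calc (r:ℝ) * ∏ v ∈ s, x v
      = (r:ℝ) * ((∏ v ∈ s, w v) ^ (-(1:ℝ)/(r:ℝ))
          * ((∏ v ∈ s, w v) ^ ((1:ℝ)/(r:ℝ)) * ∏ v ∈ s, x v)) := by
        rw [← mul_assoc ((∏ v ∈ s, w v) ^ (-(1:ℝ)/(r:ℝ))), hAB, one_mul]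
    _ ≤ (r:ℝ) * ((∏ v ∈ s, w v) ^ (-(1:ℝ)/(r:ℝ))
          * ∑ v ∈ s, (1/(r:ℝ)) * (w v * x v ^ r)) := by
        refine mul_le_mul_of_nonneg_left ?_ hrR.le
        exact mul_le_mul_of_nonneg_left hgm hA.le
    _ = (∏ v ∈ s, w v) ^ (-(1:ℝ)/(r:ℝ)) * ∑ v ∈ s, w v * x v ^ r := by
        rw [← Finset.mul_sum]
        field_simp

/-- the spectral radius is attained on the standard simplex. -/
lemma specRad_attained [Nonempty V] {r : ℕ} (hr : 0 < r)
    (E : Finset (Finset V)) (hEcard : ∀ f ∈ E, f.card = r) :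
    ∃ x : V → ℝ, (∀ v, 0 ≤ x v) ∧ (∑ v, x v ^ r) = 1 ∧
      specRad r E = (Nat.factorial r : ℝ) * (∑ f ∈ E, ∏ v ∈ f, x v) ∧
      ∀ y : V → ℝ, (∀ v, 0 ≤ y v) → y ≠ 0 →
        (Nat.factorial r : ℝ) * (∑ f ∈ E, ∏ v ∈ f, y v) / (∑ v, y v ^ r) ≤ specRad r E := by
  set num : (V → ℝ) → ℝ := fun x => (Nat.factorial r : ℝ) * (∑ f ∈ E, ∏ v ∈ f, x v) with hnum
  set K : Set (V → ℝ) := {x | (∀ v, 0 ≤ x v) ∧ (∑ v, x v ^ r) = 1} with hK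
  have hsub : K ⊆ Set.pi Set.univ (fun _ : V => Set.Icc (0:ℝ) 1) := by
    rintro x ⟨hx0, hx1⟩ v _
    refine ⟨hx0 v, ?_⟩
    have h1 : x v ^ r ≤ 1 := by
      rw [← hx1]
      exact Finset.single_le_sum (fun w _ => pow_nonneg (hx0 w) r) (mem_univ v)
    exact (pow_le_one_iff_of_nonneg (hx0 v) hr.ne').mp h1
  have hclosed : IsClosed K := by
    have h1 : IsClosed {x : V → ℝ | ∀ v, 0 ≤ x v} := by
      have he : {x : V → ℝ | ∀ v, 0 ≤ x v} = ⋂ v, {x : V → ℝ | 0 ≤ x v} := by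
        ext x; simp [Set.mem_iInter]
      rw [he]
      exact isClosed_iInter fun v => isClosed_le continuous_const (continuous_apply v)
    have h2 : IsClosed {x : V → ℝ | (∑ v, x v ^ r) = 1} :=
      isClosed_eq (continuous_finset_sum _ fun v _ => (continuous_apply v).pow r)
        continuous_const
    exact h1.inter h2
  have hcomp : IsCompact K :=
    (isCompact_univ_pi fun _ => isCompact_Icc).of_isClosed_subset hclosed hsub
  have hne : K.Nonempty := by
    obtain ⟨v₀⟩ := ‹Nonempty V›
    refine ⟨fun v => if v = v₀ then 1 else 0, fun v => by dsimp; split <;> norm_num, ?_⟩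
    have : ∀ v : V, (if v = v₀ then (1:ℝ) else 0) ^ r = if v = v₀ then 1 else 0 := by
      intro v; split <;> simp [zero_pow hr.ne']
    rw [Finset.sum_congr rfl fun v _ => this v]
    simp
  have hcont : Continuous num :=
    continuous_const.mul
      (continuous_finset_sum _ fun f _ => continuous_finset_prod _ fun v _ => continuous_apply v)
  obtain ⟨x₀, hx₀K, hmax⟩ := hcomp.exists_isMaxOn hne hcont.continuousOn
  have hub : ∀ ρ ∈ {ρ : ℝ | ∃ x : V → ℝ, (∀ v, 0 ≤ x v) ∧ x ≠ 0 ∧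
      ρ = (Nat.factorial r : ℝ) * (∑ e ∈ E, ∏ v ∈ e, x v) / (∑ v, x v ^ r)}, ρ ≤ num x₀ := by
    rintro ρ ⟨y, hy0, hyne, rfl⟩
    have hd : 0 < ∑ v, y v ^ r := by
      obtain ⟨v, hv⟩ : ∃ v, y v ≠ 0 := by
        by_contra h; push_neg at h; exact hyne (funext fun v => h v)
      exact Finset.sum_pos' (fun w _ => pow_nonneg (hy0 w) r)
        ⟨v, mem_univ v, pow_pos ((hy0 v).lt_of_ne (Ne.symm hv)) r⟩
    set d := ∑ v, y v ^ r with hdd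
    have hrR : (0:ℝ) < (r:ℝ) := by exact_mod_cast hr
    set c := d ^ (-(1:ℝ)/(r:ℝ)) with hc
    have hcpos : 0 < c := Real.rpow_pos_of_pos hd _
    have hcr : c ^ r = d⁻¹ := by
      rw [hc, ← Real.rpow_natCast (d ^ (-(1:ℝ)/(r:ℝ))) r, ← Real.rpow_mul hd.le,
        show (-(1:ℝ)/(r:ℝ)) * (r:ℕ) = -1 by field_simp, Real.rpow_neg_one]
    have hzK : (fun v => c * y v) ∈ K := by
      constructor
      · exact fun v => mul_nonneg hcpos.le (hy0 v)
      · have h1 : ∑ v, (c * y v) ^ r = c ^ r * d := by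
          rw [hdd, Finset.mul_sum]
          exact Finset.sum_congr rfl fun v _ => mul_pow c (y v) r
        rw [h1, hcr, inv_mul_cancel₀ hd.ne']
    have hnumz : num (fun v => c * y v) = num y / d := by
      rw [hnum]; dsimp only
      have h1 : ∑ f ∈ E, ∏ v ∈ f, (c * y v) = d⁻¹ * ∑ f ∈ E, ∏ v ∈ f, y v := by
        rw [Finset.mul_sum]
        refine Finset.sum_congr rfl fun f hf => ?_
        rw [Finset.prod_mul_distrib, Finset.prod_const, hEcard f hf, hcr]
      rw [h1, div_eq_mul_inv]; ring
    calc (Nat.factorial r : ℝ) * (∑ e ∈ E, ∏ v ∈ e, y v) / (∑ v, y v ^ r)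
        = num y / d := rfl
      _ = num (fun v => c * y v) := hnumz.symm
      _ ≤ num x₀ := hmax hzK
  have hx₀ne : x₀ ≠ 0 := by
    intro h
    have h2 := hx₀K.2
    rw [h] at h2
    simp only [Pi.zero_apply, zero_pow hr.ne', Finset.sum_const_zero] at h2
    norm_num at h2
  have hmem : num x₀ ∈ {ρ : ℝ | ∃ x : V → ℝ, (∀ v, 0 ≤ x v) ∧ x ≠ 0 ∧
      ρ = (Nat.factorial r : ℝ) * (∑ e ∈ E, ∏ v ∈ e, x v) / (∑ v, x v ^ r)} :=
    ⟨x₀, hx₀K.1, hx₀ne, by rw [hx₀K.2, div_one]⟩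
  have hspec : specRad r E = num x₀ := by
    unfold specRad
    exact le_antisymm (csSup_le ⟨num x₀, hmem⟩ hub) (le_csSup ⟨num x₀, hub⟩ hmem)
  refine ⟨x₀, hx₀K.1, hx₀K.2, hspec, ?_⟩
  intro y hy0 hyne
  rw [hspec]
  exact hub _ ⟨y, hy0, hyne, rfl⟩

lemma half_pow (r d : ℕ) (hr : 0 < r) :
    ((1/2:ℝ) ^ d) ^ (-(1:ℝ)/(r:ℝ)) = (2:ℝ) ^ ((d:ℝ)/(r:ℝ)) := by
  have h1 : ((1/2:ℝ) ^ d) = (2:ℝ) ^ (-(d:ℝ)) := by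
    rw [Real.rpow_neg (by norm_num : (0:ℝ) ≤ 2), Real.rpow_natCast, one_div, inv_pow]
  rw [h1, ← Real.rpow_mul (by norm_num : (0:ℝ) ≤ 2)]
  congr 1
  ring

lemma four_eq_two_rpow (r : ℕ) : (4:ℝ) ^ ((1:ℝ)/(r:ℝ)) = (2:ℝ) ^ ((2:ℝ)/(r:ℝ)) := by
  rw [show (4:ℝ) = (2:ℝ)^(2:ℕ) by norm_num, ← Real.rpow_natCast (2:ℝ) 2,
    ← Real.rpow_mul (by norm_num : (0:ℝ) ≤ 2)]
  congr 1
  push_cast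
  ring

/-- the neighbour-intersection set of edge `i`. -/
def Dset (g : ℕ → Finset V) (i : ℕ) : Finset V :=
  g i ∩ ((if i = 0 then ∅ else g (i - 1)) ∪ g (i + 1))

/-- the weight function of edge `i`. -/
noncomputable def wf (g : ℕ → Finset V) (i : ℕ) (v : V) : ℝ :=
  if v ∈ Dset g i then 1/2 else 1

lemma wf_pos (g : ℕ → Finset V) (i : ℕ) (v : V) : 0 < wf g i v := by
  unfold wf; split <;> norm_num

lemma wf_le_one (g : ℕ → Finset V) (i : ℕ) (v : V) : wf g i v ≤ 1 := by
  unfold wf; split <;> norm_num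

lemma wf_prod (g : ℕ → Finset V) (i : ℕ) :
    ∏ v ∈ g i, wf g i v = (1/2:ℝ) ^ (Dset g i).card := by
  unfold wf
  rw [Finset.prod_ite_mem (g i) (Dset g i) (fun _ => (1/2:ℝ)), Finset.prod_const]
  congr 1
  conv_rhs => rw [Dset]
  rw [Dset, ← Finset.inter_assoc, Finset.inter_self]

end Aux

section Main

variable {V : Type} [Fintype V] [DecidableEq V]

lemma main_upper {r n : ℕ} (hr : 2 ≤ r) (hn : 1 ≤ n) (g : ℕ → Finset V)
    (hout : ∀ i, n ≤ i → g i = ∅)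
    (hcard : ∀ i, i < n → (g i).card = r)
    (hconsec : ∀ i, i + 1 < n → ((g i) ∩ (g (i+1))).card = 1)
    (hfar : ∀ i j, i + 2 ≤ j → g i ∩ g j = ∅)
    (hcov : ∀ v : V, ∃ i, i < n ∧ v ∈ g i)
    (x : V → ℝ) (hx : ∀ v, 0 ≤ x v) (hsum : ∑ v, x v ^ r = 1) :
    (r : ℝ) * ∑ i ∈ range n, ∏ v ∈ g i, x v < (4:ℝ) ^ ((1:ℝ)/(r:ℝ)) := by
  have hr0 : 0 < r := by omega
  have hrR : (0:ℝ) < (r:ℝ) := by exact_mod_cast hr0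
  have hfar2 : ∀ i j (v : V), i + 2 ≤ j → v ∈ g i → v ∈ g j → False := by
    intro i j v hij h1 h2
    have h3 := hfar i j hij
    have h4 : v ∈ g i ∩ g j := Finset.mem_inter.mpr ⟨h1, h2⟩
    rw [h3] at h4
    exact absurd h4 (Finset.notMem_empty v)
  have hnext : ∀ i, (g i ∩ g (i+1)).card ≤ 1 := by
    intro i
    rcases lt_or_ge (i+1) n with h | h
    · exact (hconsec i h).le
    · rw [hout (i+1) h, Finset.inter_empty]; simp
  have hDcard : ∀ i, (Dset g i).card ≤ 2 := by
    intro i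
    have hsplit : Dset g i ⊆ (g i ∩ (if i = 0 then ∅ else g (i-1))) ∪ (g i ∩ g (i+1)) := by
      rw [Dset, Finset.inter_union_distrib_left]
    refine le_trans (Finset.card_le_card hsplit) (le_trans (Finset.card_union_le _ _) ?_)
    have hA : (g i ∩ (if i = 0 then ∅ else g (i-1))).card ≤ 1 := by
      split_ifs with h
      · simp
      · rcases lt_or_ge i n with hin | hin
        · have h' : (i-1) + 1 < n := by omega
          have hc := hconsec (i-1) h'
          have hi1 : i - 1 + 1 = i := by omega
          rw [hi1] at hc
          rw [Finset.inter_comm]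
          exact hc.le
        · rw [hout i hin, Finset.empty_inter]; simp
    have hB := hnext i
    omega
  have hDcard0 : (Dset g 0).card ≤ 1 := by
    have : Dset g 0 = g 0 ∩ g 1 := by
      rw [Dset, if_pos rfl, Finset.empty_union]
    rw [this]
    exact hnext 0
  -- per-edge AM-GM
  have key : ∀ i, i < n → (r:ℝ) * ∏ v ∈ g i, x v
      ≤ (2:ℝ) ^ (((Dset g i).card:ℝ)/(r:ℝ)) * ∑ v ∈ g i, wf g i v * x v ^ r := by
    intro i hi
    have h := edge_amgm hr0 (g i) (hcard i hi) x (wf g i) hx (fun v _ => wf_pos g i v)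
    rwa [wf_prod, half_pow r _ hr0] at h
  set coef : V → ℝ := fun v => ∑ i ∈ range n,
      (if v ∈ g i then (2:ℝ) ^ (((Dset g i).card:ℝ)/(r:ℝ)) * wf g i v else 0) with hcoef
  have swap : ∑ i ∈ range n,
        ((2:ℝ) ^ (((Dset g i).card:ℝ)/(r:ℝ)) * ∑ v ∈ g i, wf g i v * x v ^ r)
      = ∑ v, coef v * x v ^ r := by
    have h1 : ∀ i ∈ range n,
        (2:ℝ) ^ (((Dset g i).card:ℝ)/(r:ℝ)) * ∑ v ∈ g i, wf g i v * x v ^ r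
        = ∑ v, (if v ∈ g i then (2:ℝ) ^ (((Dset g i).card:ℝ)/(r:ℝ)) * wf g i v else 0)
            * x v ^ r := by
      intro i _
      rw [Finset.mul_sum]
      have h2 : ∀ v : V,
          (if v ∈ g i then (2:ℝ) ^ (((Dset g i).card:ℝ)/(r:ℝ)) * wf g i v else 0) * x v ^ r
          = if v ∈ g i
            then ((2:ℝ) ^ (((Dset g i).card:ℝ)/(r:ℝ)) * wf g i v) * x v ^ r else 0 := by
        intro v; split <;> simp
      rw [Finset.sum_congr rfl fun v _ => h2 v, Finset.sum_ite_mem, Finset.univ_inter]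
      exact Finset.sum_congr rfl fun v _ => by ring
    rw [Finset.sum_congr rfl h1, Finset.sum_comm]
    exact Finset.sum_congr rfl fun v _ => (Finset.sum_mul _ _ _).symm
  have hmono : ∀ i, (2:ℝ) ^ (((Dset g i).card:ℝ)/(r:ℝ)) ≤ (2:ℝ) ^ ((2:ℝ)/(r:ℝ)) := by
    intro i
    apply Real.rpow_le_rpow_of_exponent_le one_le_two
    have := hDcard i
    gcongr
    exact_mod_cast this
  have hmono0 : (2:ℝ) ^ (((Dset g 0).card:ℝ)/(r:ℝ)) ≤ (2:ℝ) ^ ((1:ℝ)/(r:ℝ)) := by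
    apply Real.rpow_le_rpow_of_exponent_le one_le_two
    gcongr
    exact_mod_cast hDcard0
  have h12 : (2:ℝ) ^ ((1:ℝ)/(r:ℝ)) < (2:ℝ) ^ ((2:ℝ)/(r:ℝ)) := by
    apply Real.rpow_lt_rpow_of_exponent_lt one_lt_two
    gcongr
    norm_num
  have hpos2 : (0:ℝ) < (2:ℝ) ^ ((2:ℝ)/(r:ℝ)) := by positivity
  -- coefficient bounds
  have coef_bound : ∀ v : V, coef v ≤ (2:ℝ) ^ ((2:ℝ)/(r:ℝ))
      ∧ (v ∈ g 0 → coef v < (2:ℝ) ^ ((2:ℝ)/(r:ℝ))) := by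
    intro v
    have hex : ∃ i, v ∈ g i := (hcov v).imp fun i h => h.2
    set i₀ := Nat.find hex with hi₀
    have hv₀ : v ∈ g i₀ := Nat.find_spec hex
    have hmin : ∀ j, v ∈ g j → i₀ ≤ j := fun j hj => Nat.find_min' hex hj
    set T : ℕ → ℝ := fun i =>
      if v ∈ g i then (2:ℝ) ^ (((Dset g i).card:ℝ)/(r:ℝ)) * wf g i v else 0 with hT
    have hTnn : ∀ i, 0 ≤ T i := by
      intro i; rw [hT]; dsimp only; split
      · have := wf_pos g i v; positivity
      · exact le_rfl
    have hsum' : coef v ≤ T i₀ + T (i₀ + 1) := by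
      rw [hcoef]
      calc ∑ i ∈ range n, T i
          = ∑ i ∈ (range n).filter (fun i => T i ≠ 0), T i :=
            (Finset.sum_filter_ne_zero _).symm
        _ ≤ ∑ i ∈ ({i₀, i₀+1} : Finset ℕ), T i := by
            apply Finset.sum_le_sum_of_subset_of_nonneg
            · intro j hj
              have hj2 : T j ≠ 0 := (Finset.mem_filter.mp hj).2
              have hvj : v ∈ g j := by
                by_contra hcon
                exact hj2 (by rw [hT]; simp [hcon])
              have h1 : i₀ ≤ j := hmin j hvj
              have h2 : ¬ (i₀ + 2 ≤ j) := fun hc => hfar2 i₀ j v hc hv₀ hvj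
              simp only [Finset.mem_insert, Finset.mem_singleton]
              omega
            · intro i _ _; exact hTnn i
        _ = T i₀ + T (i₀+1) := Finset.sum_pair (by omega)
    have hTle : ∀ i, T i ≤ (2:ℝ) ^ ((2:ℝ)/(r:ℝ)) * wf g i v := by
      intro i; rw [hT]; dsimp only; split
      · exact mul_le_mul_of_nonneg_right (hmono i) (wf_pos g i v).le
      · exact mul_nonneg (by positivity) (wf_pos g i v).le
    have hT0le : T 0 ≤ (2:ℝ) ^ ((1:ℝ)/(r:ℝ)) * wf g 0 v := by
      rw [hT]; dsimp only; split
      · exact mul_le_mul_of_nonneg_right hmono0 (wf_pos g 0 v).le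
      · exact mul_nonneg (by positivity) (wf_pos g 0 v).le
    by_cases hv1 : v ∈ g (i₀ + 1)
    · have hD1 : v ∈ Dset g i₀ := by
        rw [Dset]
        exact Finset.mem_inter.mpr ⟨hv₀, Finset.mem_union_right _ hv1⟩
      have hD2 : v ∈ Dset g (i₀+1) := by
        rw [Dset]
        refine Finset.mem_inter.mpr ⟨hv1, Finset.mem_union_left _ ?_⟩
        rw [if_neg (Nat.succ_ne_zero i₀)]
        simpa using hv₀
      have hw1 : wf g i₀ v = 1/2 := by rw [wf, if_pos hD1]
      have hw2 : wf g (i₀+1) v = 1/2 := by rw [wf, if_pos hD2]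
      have hb1 : T i₀ ≤ (2:ℝ) ^ ((2:ℝ)/(r:ℝ)) * (1/2) := by
        have := hTle i₀; rwa [hw1] at this
      have hb2 : T (i₀+1) ≤ (2:ℝ) ^ ((2:ℝ)/(r:ℝ)) * (1/2) := by
        have := hTle (i₀+1); rwa [hw2] at this
      constructor
      · linarith
      · intro hv0
        have hi00 : i₀ = 0 := le_antisymm (hmin 0 hv0) (Nat.zero_le _)
        have hb1' : T i₀ ≤ (2:ℝ) ^ ((1:ℝ)/(r:ℝ)) * (1/2) := by
          rw [hi00] at hw1 ⊢
          have h := hT0le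
          rwa [hw1] at h
        linarith
    · have hT1 : T (i₀+1) = 0 := by rw [hT]; simp [hv1]
      have hb1 : T i₀ ≤ (2:ℝ) ^ ((2:ℝ)/(r:ℝ)) * 1 := by
        refine le_trans (hTle i₀) ?_
        exact mul_le_mul_of_nonneg_left (wf_le_one g i₀ v) hpos2.le
      constructor
      · rw [mul_one] at hb1; linarith
      · intro hv0
        have hi00 : i₀ = 0 := le_antisymm (hmin 0 hv0) (Nat.zero_le _)
        have hb1' : T i₀ ≤ (2:ℝ) ^ ((1:ℝ)/(r:ℝ)) * 1 := by
          rw [hi00]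
          refine le_trans hT0le ?_
          exact mul_le_mul_of_nonneg_left (wf_le_one g 0 v) (by positivity)
        rw [mul_one] at hb1'
        linarith
  have hcoef_le : ∀ v : V, coef v ≤ (2:ℝ) ^ ((2:ℝ)/(r:ℝ)) := fun v => (coef_bound v).1
  have hcoef_lt : ∀ v ∈ g 0, coef v < (2:ℝ) ^ ((2:ℝ)/(r:ℝ)) := fun v hv => (coef_bound v).2 hv
  -- the chain of inequalities
  have chain1 : ∑ i ∈ range n, ((r:ℝ) * ∏ v ∈ g i, x v) ≤ ∑ v, coef v * x v ^ r := by
    rw [← swap]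
    exact Finset.sum_le_sum fun i hi => key i (Finset.mem_range.mp hi)
  have chain2 : ∑ v, coef v * x v ^ r ≤ (2:ℝ) ^ ((2:ℝ)/(r:ℝ)) := by
    calc ∑ v, coef v * x v ^ r ≤ ∑ v, (2:ℝ) ^ ((2:ℝ)/(r:ℝ)) * x v ^ r :=
        Finset.sum_le_sum fun v _ =>
          mul_le_mul_of_nonneg_right (hcoef_le v) (pow_nonneg (hx v) r)
      _ = (2:ℝ) ^ ((2:ℝ)/(r:ℝ)) := by rw [← Finset.mul_sum, hsum, mul_one]
  have hgoal : ∑ i ∈ range n, ((r:ℝ) * ∏ v ∈ g i, x v)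
      = (r:ℝ) * ∑ i ∈ range n, ∏ v ∈ g i, x v := by rw [Finset.mul_sum]
  rw [four_eq_two_rpow, ← hgoal]
  by_contra hcon
  push_neg at hcon
  -- equality everywhere
  have heq2 : ∑ v, coef v * x v ^ r = (2:ℝ) ^ ((2:ℝ)/(r:ℝ)) :=
    le_antisymm chain2 (le_trans hcon chain1)
  have heq1 : ∑ i ∈ range n, ((r:ℝ) * ∏ v ∈ g i, x v)
      = ∑ i ∈ range n,
        ((2:ℝ) ^ (((Dset g i).card:ℝ)/(r:ℝ)) * ∑ v ∈ g i, wf g i v * x v ^ r) := by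
    rw [swap]
    refine le_antisymm chain1 ?_
    rw [heq2]
    exact hcon
  have hEdges : ∀ i ∈ range n, (r:ℝ) * ∏ v ∈ g i, x v
      = (2:ℝ) ^ (((Dset g i).card:ℝ)/(r:ℝ)) * ∑ v ∈ g i, wf g i v * x v ^ r :=
    (Finset.sum_eq_sum_iff_of_le (fun i hi => key i (Finset.mem_range.mp hi))).mp heq1
  have hVert : ∀ v : V, coef v * x v ^ r = (2:ℝ) ^ ((2:ℝ)/(r:ℝ)) * x v ^ r := by
    have h1 : ∑ v, coef v * x v ^ r = ∑ v, (2:ℝ) ^ ((2:ℝ)/(r:ℝ)) * x v ^ r := by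
      rw [heq2, ← Finset.mul_sum, hsum, mul_one]
    have h2 := (Finset.sum_eq_sum_iff_of_le (fun v _ =>
      mul_le_mul_of_nonneg_right (hcoef_le v) (pow_nonneg (hx v) r))).mp h1
    exact fun v => h2 v (mem_univ v)
  have hzero : ∀ i, i < n → ∀ v ∈ g i, x v = 0 := by
    intro i
    induction i with
    | zero =>
      intro _ v hv
      have h1 := hVert v
      have h2 := hcoef_lt v hv
      by_contra hxv
      have hxp : 0 < x v ^ r := pow_pos ((hx v).lt_of_ne (Ne.symm hxv)) r
      nlinarith [mul_pos (sub_pos.mpr h2) hxp]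
    | succ i ih =>
      intro hin v hv
      have hi : i < n := by omega
      obtain ⟨v₀, hv₀⟩ := Finset.card_pos.mp
        (show 0 < (g i ∩ g (i+1)).card by rw [hconsec i hin]; norm_num)
      have hx₀ : x v₀ = 0 := ih hi v₀ (Finset.mem_inter.mp hv₀).1
      have hprod : ∏ u ∈ g (i+1), x u = 0 :=
        Finset.prod_eq_zero (Finset.mem_inter.mp hv₀).2 hx₀
      have hE := hEdges (i+1) (Finset.mem_range.mpr hin)
      rw [hprod, mul_zero] at hE
      have hS : ∑ u ∈ g (i+1), wf g (i+1) u * x u ^ r = 0 := by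
        have hpow : (0:ℝ) < (2:ℝ) ^ (((Dset g (i+1)).card:ℝ)/(r:ℝ)) := by positivity
        rcases mul_eq_zero.mp hE.symm with h | h
        · exact absurd h hpow.ne'
        · exact h
      have hterm := (Finset.sum_eq_zero_iff_of_nonneg (fun u _ =>
        mul_nonneg (wf_pos g (i+1) u).le (pow_nonneg (hx u) r))).mp hS v hv
      have hxr : x v ^ r = 0 := by
        rcases mul_eq_zero.mp hterm with h | h
        · exact absurd h (wf_pos g (i+1) v).ne'
        · exact h
      exact pow_eq_zero_iff hr0.ne' |>.mp hxr
  have hall : ∀ v : V, x v = 0 := by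
    intro v
    obtain ⟨i, hi, hvi⟩ := hcov v
    exact hzero i hi v hvi
  rw [Finset.sum_congr rfl (fun v _ => by rw [hall v, zero_pow hr0.ne'])] at hsum
  simp at hsum

lemma main_lower {r n : ℕ} (hr : 2 ≤ r) (hn : 1 ≤ n) (g : ℕ → Finset V)
    (hout : ∀ i, n ≤ i → g i = ∅)
    (hcard : ∀ i, i < n → (g i).card = r)
    (hconsec : ∀ i, i + 1 < n → ((g i) ∩ (g (i+1))).card = 1)
    (hfar : ∀ i j, i + 2 ≤ j → g i ∩ g j = ∅)
    (hcov : ∀ v : V, ∃ i, i < n ∧ v ∈ g i) :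
    ∃ x : V → ℝ, (∀ v, 0 ≤ x v) ∧ x ≠ 0 ∧
      (Nat.factorial r : ℝ) * (∑ i ∈ range n, ∏ v ∈ g i, x v) / (∑ v, x v ^ r)
        = (Nat.factorial (r-1) : ℝ) * ((2*(n:ℝ))/((n:ℝ)+1)) ^ ((2:ℝ)/(r:ℝ)) := by
  have hr0 : 0 < r := by omega
  have hrR : (0:ℝ) < (r:ℝ) := by exact_mod_cast hr0
  have hfar2 : ∀ i j (v : V), i + 2 ≤ j → v ∈ g i → v ∈ g j → False := by
    intro i j v hij h1 h2
    have h3 := hfar i j hij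
    have h4 : v ∈ g i ∩ g j := Finset.mem_inter.mpr ⟨h1, h2⟩
    rw [h3] at h4
    exact absurd h4 (Finset.notMem_empty v)
  have hfactcast : (Nat.factorial r : ℝ) = (r:ℝ) * (Nat.factorial (r-1) : ℝ) := by
    rw [← Nat.mul_factorial_pred hr0.ne']
    push_cast
    ring
  -- cardinality of the vertex set
  set f : ℕ → Finset V := fun i => if i = 0 then g 0 else g i \ g (i-1) with hf
  have hfsub : ∀ i, f i ⊆ g i := by
    intro i
    rw [hf]; dsimp only
    split_ifs with h
    · rw [h]
    · exact Finset.sdiff_subset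
  have hdisj : ∀ i ∈ range n, ∀ j ∈ range n, i ≠ j → Disjoint (f i) (f j) := by
    have haux : ∀ i j, i < j → Disjoint (f i) (f j) := by
      intro i j hij
      have hj0 : j ≠ 0 := by omega
      have hfj : f j = g j \ g (j-1) := by rw [hf]; dsimp only; rw [if_neg hj0]
      rcases eq_or_lt_of_le (Nat.succ_le_of_lt hij) with h | h
      · have hji : j - 1 = i := by omega
        rw [hfj, hji]
        exact Disjoint.mono_left (hfsub i) disjoint_sdiff_self_right
      · have hd : Disjoint (g i) (g j) :=
          Finset.disjoint_iff_inter_eq_empty.mpr (hfar i j (by omega))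
        exact Disjoint.mono (hfsub i) (hfsub j) hd
    intro i hi j hj hij
    rcases lt_or_gt_of_ne hij with h | h
    · exact haux i j h
    · exact (haux j i h).symm
  have hcover : (range n).biUnion f = univ := by
    apply Finset.eq_univ_of_forall
    intro v
    rw [Finset.mem_biUnion]
    have hex : ∃ i, v ∈ g i := (hcov v).imp fun i h => h.2
    have hi₀n : Nat.find hex < n := by
      obtain ⟨i, hi, hvi⟩ := hcov v
      exact lt_of_le_of_lt (Nat.find_min' hex hvi) hi
    refine ⟨Nat.find hex, Finset.mem_range.mpr hi₀n, ?_⟩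
    rw [hf]; dsimp only
    split_ifs with h
    · rw [← h]; exact Nat.find_spec hex
    · rw [Finset.mem_sdiff]
      exact ⟨Nat.find_spec hex, fun hcon => Nat.find_min hex (by omega) hcon⟩
  have hcardV : (univ : Finset V).card = n * (r-1) + 1 := by
    obtain ⟨m, hm⟩ : ∃ m, n = m + 1 := ⟨n-1, by omega⟩
    rw [← hcover, Finset.card_biUnion hdisj, hm, Finset.sum_range_succ']
    have h0 : (f 0).card = r := by
      rw [hf]; dsimp only; rw [if_pos rfl]; exact hcard 0 (by omega)
    have hsucc : ∀ i ∈ range m, (f (i+1)).card = r - 1 := by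
      intro i hi
      have hi' : i + 1 < n := by have := Finset.mem_range.mp hi; omega
      rw [hf]; dsimp only; rw [if_neg (Nat.succ_ne_zero i)]
      have hsd := Finset.card_sdiff_add_card_inter (g (i+1)) (g (i+1-1))
      have hint : (g (i+1) ∩ g (i+1-1)).card = 1 := by
        simp only [Nat.add_sub_cancel]
        rw [Finset.inter_comm]
        exact hconsec i hi'
      rw [hint, hcard (i+1) hi'] at hsd
      omega
    rw [Finset.sum_congr rfl hsucc, Finset.sum_const, h0, Finset.card_range, smul_eq_mul]
    have hmul : (m+1) * (r-1) = m*(r-1) + (r-1) := Nat.succ_mul m (r-1)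
    omega
  have hVne : (univ : Finset V).Nonempty := by
    apply Finset.card_pos.mp
    rw [hcardV]
    omega
  rcases eq_or_lt_of_le hn with hn1 | hn2
  · -- n = 1 : the all-ones vector
    refine ⟨fun _ => 1, fun v => zero_le_one, ?_, ?_⟩
    · obtain ⟨v, _⟩ := hVne
      intro hcon
      have := congrFun hcon v
      norm_num at this
    · have hnum : ∑ i ∈ range n, ∏ v ∈ g i, (1:ℝ) = 1 := by
        rw [← hn1]
        simp
      have hden : ∑ v : V, (1:ℝ) ^ r = (r:ℝ) := by
        simp only [one_pow, Finset.sum_const, nsmul_eq_mul, mul_one]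
        rw [hcardV, ← hn1]
        have h1r : 1 * (r-1) + 1 = r := by omega
        rw [h1r]
      show (Nat.factorial r : ℝ) * (∑ i ∈ range n, ∏ v ∈ g i, (1:ℝ)) / (∑ v : V, (1:ℝ) ^ r)
        = (Nat.factorial (r-1) : ℝ) * ((2*(n:ℝ))/((n:ℝ)+1)) ^ ((2:ℝ)/(r:ℝ))
      rw [hnum, hden, hfactcast]
      rw [show (2*(n:ℝ))/((n:ℝ)+1) = 1 by rw [← hn1]; norm_num, Real.one_rpow, mul_one,
        mul_one, mul_comm (r:ℝ), mul_div_assoc, div_self (ne_of_gt hrR), mul_one]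
  · -- n ≥ 2
    have hn2' : 2 ≤ n := hn2
    have hp_ex : (g 0 \ g 1).Nonempty := by
      apply Finset.card_pos.mp
      have hsd := Finset.card_sdiff_add_card_inter (g 0) (g 1)
      have hint : (g 0 ∩ g 1).card = 1 := hconsec 0 (by omega)
      rw [hint, hcard 0 (by omega)] at hsd
      omega
    have hq_ex : (g (n-1) \ g (n-2)).Nonempty := by
      apply Finset.card_pos.mp
      have hsd := Finset.card_sdiff_add_card_inter (g (n-1)) (g (n-2))
      have hint : (g (n-1) ∩ g (n-2)).card = 1 := by
        rw [Finset.inter_comm]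
        have := hconsec (n-2) (by omega)
        rwa [show n-2+1 = n-1 by omega] at this
      rw [hint, hcard (n-1) (by omega)] at hsd
      omega
    obtain ⟨p, hp⟩ := hp_ex
    obtain ⟨q, hq⟩ := hq_ex
    have hp1 : p ∈ g 0 := (Finset.mem_sdiff.mp hp).1
    have hp2 : p ∉ g 1 := (Finset.mem_sdiff.mp hp).2
    have hq1 : q ∈ g (n-1) := (Finset.mem_sdiff.mp hq).1
    have hq2 : q ∉ g (n-2) := (Finset.mem_sdiff.mp hq).2
    have hp_mem : ∀ i, p ∈ g i → i = 0 := by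
      intro i hi
      by_contra h
      rcases lt_or_ge i 2 with h2' | h2'
      · have : i = 1 := by omega
        rw [this] at hi
        exact hp2 hi
      · exact hfar2 0 i p (by omega) hp1 hi
    have hq_mem : ∀ i, i < n → q ∈ g i → i = n-1 := by
      intro i hin hi
      by_contra h
      rcases eq_or_lt_of_le (show i ≤ n - 2 by omega) with h' | h'
      · rw [h'] at hi
        exact hq2 hi
      · exact hfar2 i (n-1) q (by omega) hi hq1
    set B : Finset V := (range (n-1)).biUnion (fun j => g j ∩ g (j+1)) with hB
    set spec : Finset V := B ∪ {p, q} with hspec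
    have hmemB : ∀ v : V, v ∈ B ↔ ∃ j, j < n-1 ∧ v ∈ g j ∧ v ∈ g (j+1) := by
      intro v
      rw [hB]
      simp only [Finset.mem_biUnion, Finset.mem_range, Finset.mem_inter]
    have hpB : p ∉ B := by
      rw [hmemB p]
      rintro ⟨j, hj, h1, h2⟩
      have := hp_mem (j+1) h2
      omega
    have hqB : q ∉ B := by
      rw [hmemB q]
      rintro ⟨j, hj, h1, h2⟩
      have hjn : j < n := by omega
      have := hq_mem j hjn h1
      omega
    have hpq : p ≠ q := by
      intro h
      have hq0 : q ∈ g 0 := h ▸ hp1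
      have := hq_mem 0 (by omega) hq0
      omega
    have hcardspec : spec.card = n + 1 := by
      have hdisjBpq : Disjoint B {p, q} := by
        rw [Finset.disjoint_right]
        intro v hv
        rcases Finset.mem_insert.mp hv with h | h
        · rw [h]; exact hpB
        · rw [Finset.mem_singleton.mp h]; exact hqB
      rw [hspec, Finset.card_union_of_disjoint hdisjBpq, Finset.card_pair hpq]
      have hcardB : B.card = n - 1 := by
        rw [hB, Finset.card_biUnion]
        · rw [Finset.sum_congr rfl (fun j hj => hconsec j
            (by have := Finset.mem_range.mp hj; omega)), Finset.sum_const,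
            Finset.card_range, smul_eq_mul, mul_one]
        · intro a ha b hb hab
          have haux : ∀ a b : ℕ, a < b → Disjoint (g a ∩ g (a+1)) (g b ∩ g (b+1)) := by
            intro a b h
            rw [Finset.disjoint_left]
            intro v hv1 hv2
            exact hfar2 a (b+1) v (by omega) (Finset.mem_inter.mp hv1).1
              (Finset.mem_inter.mp hv2).2
          rcases lt_or_gt_of_ne hab with h | h
          · exact haux a b h
          · exact (haux b a h).symm
      rw [hcardB]
      omega
    have hcspec : ∀ i, i < n → (g i ∩ spec).card = 2 := by
      intro i hin
      rcases Nat.eq_zero_or_pos i with hi0 | hipos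
      · subst hi0
        obtain ⟨c, hc⟩ := Finset.card_eq_one.mp (hconsec 0 (by omega))
        have hcmem : c ∈ g 0 ∩ g 1 := by rw [hc]; exact Finset.mem_singleton_self c
        have hcg0 : c ∈ g 0 := (Finset.mem_inter.mp hcmem).1
        have hcg1 : c ∈ g 1 := (Finset.mem_inter.mp hcmem).2
        have hgoal : g 0 ∩ spec = {p, c} := by
          ext v
          simp only [Finset.mem_inter, Finset.mem_insert, Finset.mem_singleton]
          constructor
          · rintro ⟨hv0, hvs⟩
            rcases Finset.mem_union.mp hvs with hvB | hvpq
            · obtain ⟨j, hj, h1, h2⟩ := (hmemB v).mp hvB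
              rcases Nat.eq_zero_or_pos j with hj0 | hjpos
              · subst hj0
                right
                have : v ∈ g 0 ∩ g 1 := Finset.mem_inter.mpr ⟨h1, h2⟩
                rw [hc] at this
                exact Finset.mem_singleton.mp this
              · exact (hfar2 0 (j+1) v (by omega) hv0 h2).elim
            · rcases Finset.mem_insert.mp hvpq with h | h
              · left; exact h
              · exfalso
                rw [Finset.mem_singleton.mp h] at hv0
                have := hq_mem 0 (by omega) hv0
                omega
          · rintro (h | h)
            · rw [h]; exact ⟨hp1, Finset.mem_union_right _ (Finset.mem_insert_self p {q})⟩
            · rw [h]; exact ⟨hcg0, Finset.mem_union_left _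
                ((hmemB c).mpr ⟨0, by omega, hcg0, hcg1⟩)⟩
        rw [hgoal]
        exact Finset.card_pair (fun h => hp2 (h ▸ hcg1))
      rcases eq_or_lt_of_le (show i ≤ n-1 by omega) with hilast | himid
      · -- i = n-1
        have hc1 : (g (n-2) ∩ g (n-1)).card = 1 := by
          have := hconsec (n-2) (by omega)
          rwa [show n-2+1 = n-1 by omega] at this
        obtain ⟨c, hc⟩ := Finset.card_eq_one.mp hc1
        have hcmem : c ∈ g (n-2) ∩ g (n-1) := by rw [hc]; exact Finset.mem_singleton_self c
        have hcg1 : c ∈ g (n-2) := (Finset.mem_inter.mp hcmem).1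
        have hcg2 : c ∈ g (n-1) := (Finset.mem_inter.mp hcmem).2
        have hgoal : g i ∩ spec = {c, q} := by
          rw [hilast]
          ext v
          simp only [Finset.mem_inter, Finset.mem_insert, Finset.mem_singleton]
          constructor
          · rintro ⟨hv0, hvs⟩
            rcases Finset.mem_union.mp hvs with hvB | hvpq
            · obtain ⟨j, hj, h1, h2⟩ := (hmemB v).mp hvB
              rcases eq_or_lt_of_le (show j ≤ n-2 by omega) with hj' | hj'
              · left
                have hv12 : v ∈ g (n-2) ∩ g (n-1) := by
                  refine Finset.mem_inter.mpr ⟨?_, hv0⟩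
                  rw [← hj']; exact h1
                rw [hc] at hv12
                exact Finset.mem_singleton.mp hv12
              · exact (hfar2 j (n-1) v (by omega) h1 hv0).elim
            · rcases Finset.mem_insert.mp hvpq with h | h
              · exfalso
                rw [h] at hv0
                have := hp_mem (n-1) hv0
                omega
              · right; exact Finset.mem_singleton.mp h
          · rintro (h | h)
            · rw [h]
              refine ⟨hcg2, Finset.mem_union_left _ ((hmemB c).mpr ⟨n-2, by omega, hcg1, ?_⟩)⟩
              rwa [show n-2+1 = n-1 by omega]
            · rw [h]; exact ⟨hq1, Finset.mem_union_right _ (by simp)⟩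
        rw [hgoal]
        exact Finset.card_pair (fun h => hq2 (h ▸ hcg1))
      · -- 1 ≤ i < n-1
        have ha1 : (g (i-1) ∩ g i).card = 1 := by
          have := hconsec (i-1) (by omega)
          rwa [show i-1+1 = i by omega] at this
        obtain ⟨a, ha⟩ := Finset.card_eq_one.mp ha1
        obtain ⟨b, hb⟩ := Finset.card_eq_one.mp (hconsec i (by omega))
        have hamem : a ∈ g (i-1) ∩ g i := by rw [ha]; exact Finset.mem_singleton_self a
        have hbmem : b ∈ g i ∩ g (i+1) := by rw [hb]; exact Finset.mem_singleton_self b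
        have ha1' : a ∈ g (i-1) := (Finset.mem_inter.mp hamem).1
        have ha2' : a ∈ g i := (Finset.mem_inter.mp hamem).2
        have hb1' : b ∈ g i := (Finset.mem_inter.mp hbmem).1
        have hb2' : b ∈ g (i+1) := (Finset.mem_inter.mp hbmem).2
        have hgoal : g i ∩ spec = {a, b} := by
          ext v
          simp only [Finset.mem_inter, Finset.mem_insert, Finset.mem_singleton]
          constructor
          · rintro ⟨hvi, hvs⟩
            rcases Finset.mem_union.mp hvs with hvB | hvpq
            · obtain ⟨j, hj, h1, h2⟩ := (hmemB v).mp hvB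
              by_cases hji : j = i
              · right
                have : v ∈ g i ∩ g (i+1) := Finset.mem_inter.mpr ⟨hvi, by rw [← hji]; exact h2⟩
                rw [hb] at this
                exact Finset.mem_singleton.mp this
              by_cases hji' : j + 1 = i
              · left
                have : v ∈ g (i-1) ∩ g i := Finset.mem_inter.mpr
                  ⟨by rw [show i - 1 = j by omega]; exact h1, hvi⟩
                rw [ha] at this
                exact Finset.mem_singleton.mp this
              · exfalso
                rcases (show j + 2 ≤ i ∨ i + 2 ≤ j + 1 by omega) with h | h
                · exact hfar2 j i v h h1 hvi
                · exact hfar2 i (j+1) v h hvi h2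
            · rcases Finset.mem_insert.mp hvpq with h | h
              · exfalso
                rw [h] at hvi
                have := hp_mem i hvi
                omega
              · exfalso
                rw [Finset.mem_singleton.mp h] at hvi
                have := hq_mem i hin hvi
                omega
          · rintro (h | h)
            · rw [h]
              refine ⟨ha2', Finset.mem_union_left _ ((hmemB a).mpr ⟨i-1, by omega, ha1', ?_⟩)⟩
              rwa [show i-1+1 = i by omega]
            · rw [h]
              exact ⟨hb1', Finset.mem_union_left _ ((hmemB b).mpr ⟨i, by omega, hb1', hb2'⟩)⟩
        rw [hgoal]
        refine Finset.card_pair (fun h => ?_)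
        exact hfar2 (i-1) (i+1) a (by omega) ha1' (h ▸ hb2')
    -- the test vector
    have hnR : (0:ℝ) < (n:ℝ) := by exact_mod_cast (by omega : 0 < n)
    have hbase : (0:ℝ) < (2*(n:ℝ))/((n:ℝ)+1) := by positivity
    set y : ℝ := ((2*(n:ℝ))/((n:ℝ)+1)) ^ ((1:ℝ)/(r:ℝ)) with hy
    have hypos : 0 < y := Real.rpow_pos_of_pos hbase _
    have hyr : y ^ r = (2*(n:ℝ))/((n:ℝ)+1) := by
      rw [hy, ← Real.rpow_natCast (((2*(n:ℝ))/((n:ℝ)+1)) ^ ((1:ℝ)/(r:ℝ))) r,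
        ← Real.rpow_mul hbase.le, one_div, inv_mul_cancel₀ (ne_of_gt hrR), Real.rpow_one]
    set x : V → ℝ := fun v => if v ∈ spec then y else 1 with hxdef
    have hxpos : ∀ v, 0 < x v := by
      intro v
      simp only [hxdef]
      split
      · exact hypos
      · norm_num
    refine ⟨x, fun v => (hxpos v).le, ?_, ?_⟩
    · obtain ⟨v, _⟩ := hVne
      intro hcon
      have h1 := congrFun hcon v
      have h2 := hxpos v
      rw [h1] at h2
      norm_num at h2
    · have hnum : ∑ i ∈ range n, ∏ v ∈ g i, x v = (n:ℝ) * y^2 := by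
        have hperedge : ∀ i ∈ range n, ∏ v ∈ g i, x v = y^2 := by
          intro i hi
          simp only [hxdef]
          rw [Finset.prod_ite_mem (g i) spec (fun _ => y), Finset.prod_const,
            hcspec i (Finset.mem_range.mp hi)]
        rw [Finset.sum_congr rfl hperedge, Finset.sum_const, Finset.card_range, nsmul_eq_mul]
      have hden : ∑ v : V, x v ^ r = (n:ℝ) * (r:ℝ) := by
        have h1 : ∀ v : V, x v ^ r = if v ∈ spec then y^r else 1 := by
          intro v
          simp only [hxdef]
          split_ifs <;> simp
        rw [Finset.sum_congr rfl fun v _ => h1 v,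
          ← Finset.sum_inter_add_sum_sdiff univ spec (fun v => if v ∈ spec then y^r else 1)]
        rw [Finset.univ_inter]
        rw [Finset.sum_congr rfl (fun v hv => if_pos hv),
          Finset.sum_congr rfl (fun v hv => if_neg (Finset.mem_sdiff.mp hv).2),
          Finset.sum_const, Finset.sum_const, Finset.card_sdiff_of_subset (Finset.subset_univ spec),
          hcardspec, hcardV, nsmul_eq_mul, nsmul_eq_mul, hyr]
        have hsub : n*(r-1)+1 - (n+1) = n*(r-2) := by
          have h' : n*(r-1) = n*(r-2) + n := by
            rw [show r - 1 = (r-2)+1 by omega, Nat.mul_add, mul_one]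
          omega
        rw [hsub]
        have hcast : ((n*(r-2) : ℕ) : ℝ) = (n:ℝ)*((r:ℝ)-2) := by
          push_cast [Nat.cast_sub (show 2 ≤ r from hr)]
          ring
        rw [hcast]
        have hne : (n:ℝ) + 1 ≠ 0 := by positivity
        push_cast
        field_simp
        ring
      rw [hnum, hden]
      have hy2 : y^2 = ((2*(n:ℝ))/((n:ℝ)+1)) ^ ((2:ℝ)/(r:ℝ)) := by
        rw [hy, ← Real.rpow_natCast (((2*(n:ℝ))/((n:ℝ)+1)) ^ ((1:ℝ)/(r:ℝ))) 2,
          ← Real.rpow_mul hbase.le]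
        congr 1
        push_cast
        ring
      rw [hfactcast, hy2]
      have hrne : (r:ℝ) ≠ 0 := ne_of_gt hrR
      field_simp

end Main

lemma lower_eq (r n : ℕ) (hr : 0 < r) (hn : 1 ≤ n) :
    ((1 + 2 / (n : ℝ) + 1 / (n : ℝ) ^ 2) ^ (-(1 : ℝ) / (r:ℝ))) * ((4 : ℝ) ^ ((1 : ℝ) / (r:ℝ)))
      = ((2*(n:ℝ))/((n:ℝ)+1)) ^ ((2:ℝ)/(r:ℝ)) := by
  have hn0 : (0:ℝ) < (n:ℝ) := by exact_mod_cast hn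
  have ha : (0:ℝ) < ((n:ℝ)+1)/(n:ℝ) := by positivity
  have hkey : 1 + 2/(n:ℝ) + 1/(n:ℝ)^2 = (((n:ℝ)+1)/(n:ℝ))^2 := by
    field_simp
    ring
  rw [hkey, ← Real.rpow_natCast (((n:ℝ)+1)/(n:ℝ)) 2, ← Real.rpow_mul ha.le,
    show ((2:ℕ):ℝ) * (-(1:ℝ)/(r:ℝ)) = -((2:ℝ)/(r:ℝ)) by push_cast; ring,
    Real.rpow_neg ha.le, ← Real.inv_rpow ha.le, inv_div,
    show (4:ℝ) = (2:ℝ)^(2:ℕ) by norm_num, ← Real.rpow_natCast (2:ℝ) 2,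
    ← Real.rpow_mul (by norm_num : (0:ℝ) ≤ 2),
    show ((2:ℕ):ℝ) * ((1:ℝ)/(r:ℝ)) = (2:ℝ)/(r:ℝ) by push_cast; ring,
    ← Real.mul_rpow (by positivity) (by norm_num : (0:ℝ) ≤ 2)]
  congr 1
  field_simp

/-- for a family of `r`-uniform loose paths `A_n^{(r)}` (`n` edges),
the sandwich bounds `(1 + 2/n + 1/n²)^{-1/r}·(r−1)!·4^{1/r} ≤ ρ(A_n^{(r)}) < (r−1)!·4^{1/r}`
hold for all `n ≥ 1`, and `ρ(A_n^{(r)}) → (r−1)!·4^{1/r}` as `n → ∞`. -/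
theorem loosePath_specRad_tendsto (r : ℕ) (hr : 2 ≤ r) (N : ℕ → ℕ)
    (E : ∀ n, Finset (Finset (Fin (N n)))) (e : ∀ n, Fin n → Finset (Fin (N n)))
    (hcard : ∀ n, 1 ≤ n → ∀ i, (e n i).card = r)
    (hE : ∀ n, 1 ≤ n → E n = Finset.image (e n) Finset.univ)
    (hinj : ∀ n, 1 ≤ n → Function.Injective (e n))
    (hconsec : ∀ n, 1 ≤ n → ∀ i j : Fin n, (i : ℕ) + 1 = (j : ℕ) → (e n i ∩ e n j).card = 1)
    (hfar : ∀ n, 1 ≤ n → ∀ i j : Fin n, (i : ℕ) + 2 ≤ (j : ℕ) → e n i ∩ e n j = ∅)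
    (hcov : ∀ n, 1 ≤ n → ∀ v : Fin (N n), ∃ i, v ∈ e n i) :
    (∀ n : ℕ, 1 ≤ n →
      ((1 + 2 / (n : ℝ) + 1 / (n : ℝ) ^ 2) ^ (-(1 : ℝ) / r)) *
          ((Nat.factorial (r - 1) : ℝ) * (4 : ℝ) ^ ((1 : ℝ) / r)) ≤ specRad r (E n) ∧
      specRad r (E n) < (Nat.factorial (r - 1) : ℝ) * (4 : ℝ) ^ ((1 : ℝ) / r)) ∧
    Tendsto (fun n => specRad r (E n)) atTop
      (𝓝 ((Nat.factorial (r - 1) : ℝ) * (4 : ℝ) ^ ((1 : ℝ) / r))) := by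
  have hr0 : 0 < r := by omega
  have hrR : (0:ℝ) < (r:ℝ) := by exact_mod_cast hr0
  have hfactpos : (0:ℝ) < (Nat.factorial (r-1) : ℝ) := by
    exact_mod_cast (r-1).factorial_pos
  have main : ∀ n : ℕ, 1 ≤ n →
      ((1 + 2 / (n : ℝ) + 1 / (n : ℝ) ^ 2) ^ (-(1 : ℝ) / r)) *
          ((Nat.factorial (r - 1) : ℝ) * (4 : ℝ) ^ ((1 : ℝ) / r)) ≤ specRad r (E n) ∧
      specRad r (E n) < (Nat.factorial (r - 1) : ℝ) * (4 : ℝ) ^ ((1 : ℝ) / r) := by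
    intro n hn
    set g : ℕ → Finset (Fin (N n)) := fun i => if h : i < n then e n ⟨i, h⟩ else ∅ with hg
    have hout : ∀ i, n ≤ i → g i = ∅ := by
      intro i hi
      rw [hg]
      exact dif_neg (by omega)
    have hgcard : ∀ i, i < n → (g i).card = r := by
      intro i hi
      rw [hg]; dsimp only; rw [dif_pos hi]
      exact hcard n hn _
    have hgcons : ∀ i, i + 1 < n → ((g i) ∩ (g (i+1))).card = 1 := by
      intro i hi
      rw [hg]; dsimp only
      rw [dif_pos (by omega : i < n), dif_pos hi]
      exact hconsec n hn ⟨i, by omega⟩ ⟨i+1, hi⟩ rfl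
    have hgfar : ∀ i j, i + 2 ≤ j → g i ∩ g j = ∅ := by
      intro i j hij
      rw [hg]; dsimp only
      split_ifs with h1 h2
      · exact hfar n hn ⟨i, h1⟩ ⟨j, h2⟩ hij
      · exact Finset.inter_empty _
      · exact Finset.empty_inter _
      · exact Finset.empty_inter _
    have hgcov : ∀ v : Fin (N n), ∃ i, i < n ∧ v ∈ g i := by
      intro v
      obtain ⟨i, hi⟩ := hcov n hn v
      refine ⟨i.1, i.isLt, ?_⟩
      rw [hg]; dsimp only; rw [dif_pos i.isLt]
      simpa using hi
    have hEcard : ∀ f ∈ E n, f.card = r := by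
      intro f hf
      rw [hE n hn] at hf
      obtain ⟨i, _, rfl⟩ := Finset.mem_image.mp hf
      exact hcard n hn i
    haveI : Nonempty (Fin (N n)) := by
      have h0 : 0 < (g 0).card := by
        rw [hgcard 0 (by omega)]
        omega
      obtain ⟨v, _⟩ := Finset.card_pos.mp h0
      exact ⟨v⟩
    have hEsum : ∀ x : Fin (N n) → ℝ,
        (∑ f ∈ E n, ∏ v ∈ f, x v) = ∑ i ∈ Finset.range n, ∏ v ∈ g i, x v := by
      intro x
      rw [hE n hn, Finset.sum_image (fun a _ b _ hab => hinj n hn hab),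
        ← Fin.sum_univ_eq_sum_range (fun i => ∏ v ∈ g i, x v) n]
      refine Finset.sum_congr rfl fun i _ => ?_
      rw [hg]; dsimp only; rw [dif_pos i.isLt]
    obtain ⟨x₀, hx₀nn, hx₀sum, hx₀spec, hx₀ub⟩ := specRad_attained hr0 (E n) hEcard
    constructor
    · -- lower bound
      obtain ⟨xt, hxt1, hxt2, hxt3⟩ := main_lower hr hn g hout hgcard hgcons hgfar hgcov
      have h1 := hx₀ub xt hxt1 hxt2
      rw [hEsum xt, hxt3] at h1
      calc ((1 + 2 / (n : ℝ) + 1 / (n : ℝ) ^ 2) ^ (-(1 : ℝ) / r)) *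
            ((Nat.factorial (r - 1) : ℝ) * (4 : ℝ) ^ ((1 : ℝ) / r))
          = (Nat.factorial (r-1) : ℝ) * (((1 + 2 / (n : ℝ) + 1 / (n : ℝ) ^ 2)
              ^ (-(1 : ℝ) / (r:ℝ))) * ((4 : ℝ) ^ ((1 : ℝ) / (r:ℝ)))) := by ring
        _ = (Nat.factorial (r-1) : ℝ) * ((2*(n:ℝ))/((n:ℝ)+1)) ^ ((2:ℝ)/(r:ℝ)) := by
            rw [lower_eq r n hr0 hn]
        _ ≤ specRad r (E n) := h1
    · -- upper bound
      have h2 := main_upper hr hn g hout hgcard hgcons hgfar hgcov x₀ hx₀nn hx₀sum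
      rw [hx₀spec, hEsum x₀]
      have hfact : (Nat.factorial r : ℝ) = (Nat.factorial (r-1) : ℝ) * (r:ℝ) := by
        rw [← Nat.mul_factorial_pred hr0.ne']
        push_cast
        ring
      calc (Nat.factorial r : ℝ) * (∑ i ∈ Finset.range n, ∏ v ∈ g i, x₀ v)
          = (Nat.factorial (r-1) : ℝ) * ((r:ℝ) * ∑ i ∈ Finset.range n, ∏ v ∈ g i, x₀ v) := by
            rw [hfact]; ring
        _ < (Nat.factorial (r-1) : ℝ) * ((4:ℝ) ^ ((1:ℝ)/(r:ℝ))) :=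
            mul_lt_mul_of_pos_left h2 hfactpos
  refine ⟨main, ?_⟩
  have h1 : Tendsto (fun n : ℕ => 1 + 2/(n:ℝ) + 1/(n:ℝ)^2) atTop (𝓝 1) := by
    have t2 : Tendsto (fun n : ℕ => 2/(n:ℝ)) atTop (𝓝 0) :=
      tendsto_const_div_atTop_nhds_zero_nat 2
    have t3 : Tendsto (fun n : ℕ => 1/(n:ℝ)^2) atTop (𝓝 0) := by
      have h4 : Tendsto (fun n : ℕ => (n:ℝ)^2) atTop atTop :=
        (tendsto_pow_atTop (by norm_num : (2:ℕ) ≠ 0)).comp tendsto_natCast_atTop_atTop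
      have h5 := h4.inv_tendsto_atTop; simp only [one_div]; exact h5
    have := ((tendsto_const_nhds (x := (1:ℝ)) (f := atTop)).add t2).add t3
    simpa using this
  have h2 : Tendsto (fun y : ℝ => y ^ (-(1:ℝ)/(r:ℝ))) (𝓝 1) (𝓝 1) := by
    have := (Real.continuousAt_rpow_const 1 (-(1:ℝ)/(r:ℝ)) (Or.inl one_ne_zero)).tendsto
    simpa [Real.one_rpow] using this
  have hL : Tendsto (fun n : ℕ => ((1 + 2/(n:ℝ) + 1/(n:ℝ)^2) ^ (-(1:ℝ)/(r:ℝ))) *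
      ((Nat.factorial (r - 1) : ℝ) * (4 : ℝ) ^ ((1 : ℝ) / r))) atTop
      (𝓝 ((Nat.factorial (r - 1) : ℝ) * (4 : ℝ) ^ ((1 : ℝ) / r))) := by
    have := (h2.comp h1).mul_const ((Nat.factorial (r - 1) : ℝ) * (4 : ℝ) ^ ((1 : ℝ) / r))
    simpa using this
  refine tendsto_of_tendsto_of_tendsto_of_le_of_le' hL tendsto_const_nhds ?_ ?_
  · exact eventually_atTop.mpr ⟨1, fun n hn => (main n hn).1⟩
  · exact eventually_atTop.mpr ⟨1, fun n hn => (main n hn).2.le⟩
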